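/- arXiv:1101.4747 — 3 statements merged into one kernel-verified Lean document; each statement's English description precedes it below -/
import Mathlib

section
/- For every natural number n ≥ 1, the identity ∑_{i=1}^{n} (1/i) · C(2(i−1), i−1) · C(2(n+1−i), n+1−i) = 2 · C(2n, n−1) holds in the rational numbers. -/
open Finset

lemma cb_key (n : ℕ) :
    ((n : ℚ) + 1) * ((2 * (n + 1)).choose (n + 1) : ℚ)
      = 2 * (2 * n + 1) * ((2 * n).choose n : ℚ) := by
  have h := Nat.succ_mul_centralBinom_succ n
  simp only [Nat.centralBinom] at h
  exact_mod_cast h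

lemma aux_partial (n : ℕ) : ∀ m, m ≤ n →
    ∑ i ∈ Finset.Icc 1 m,
      (1 / (i : ℚ)) * ((2 * (i - 1)).choose (i - 1) : ℚ) *
        ((2 * (n + 1 - i)).choose (n + 1 - i) : ℚ)
      = ((2 * (n + 1)).choose (n + 1) : ℚ) / 2
        - (2 * ((n - m : ℕ) : ℚ) + 1) / (n + 1) * ((2 * m).choose m : ℚ)
            * ((2 * (n - m)).choose (n - m) : ℚ) := by
  intro m
  induction m with
  | zero =>
      intro _
      simp only [Nat.sub_zero, Finset.Icc_self]
      have hk := cb_key n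
      have hn1 : ((n : ℚ) + 1) ≠ 0 := by positivity
      simp only [show Finset.Icc 1 0 = (∅ : Finset ℕ) by rfl, Finset.sum_empty]
      field_simp
      simp only [Nat.mul_zero, Nat.choose_zero_right, Nat.cast_one]
      linarith [hk]
  | succ m ih =>
      intro h
      have hm : m ≤ n := Nat.le_of_succ_le h
      obtain ⟨k, rfl⟩ : ∃ k, n = m + 1 + k := ⟨n - (m + 1), by omega⟩
      rw [Finset.sum_Icc_succ_top (by omega : 1 ≤ m + 1), ih (by omega)]
      have e1 : m + 1 + k - m = k + 1 := by omega
      have e2 : m + 1 + k - (m + 1) = k := by omega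
      have e3 : m + 1 + k + 1 - (m + 1) = k + 1 := by omega
      have e4 : m + 1 - 1 = m := rfl
      rw [e1, e2, e3, e4]
      have h1 := cb_key m
      have h2 := cb_key k
      have hm1 : ((m : ℚ) + 1) ≠ 0 := by positivity
      have hk1 : 2 * (k : ℚ) + 1 ≠ 0 := by positivity
      have hA : ((2 * (m + 1)).choose (m + 1) : ℚ)
          = 2 * (2 * m + 1) * ((2 * m).choose m : ℚ) / (m + 1) := by
        rw [eq_div_iff hm1]; linarith [h1]
      have hB : ((2 * k).choose k : ℚ)
          = ((k : ℚ) + 1) * ((2 * (k + 1)).choose (k + 1) : ℚ) / (2 * (2 * k + 1)) := by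
        rw [eq_div_iff (by positivity)]; linarith [h2]
      rw [hA, hB]
      have hd : ((m : ℚ) + 1 + k + 1) ≠ 0 := by positivity
      push_cast
      field_simp
      ring

theorem a_n_eval (n : ℕ) (hn : 1 ≤ n) :
    ∑ i ∈ Finset.Icc 1 n,
      (1 / (i : ℚ)) * ((2 * (i - 1)).choose (i - 1) : ℚ) *
        ((2 * (n + 1 - i)).choose (n + 1 - i) : ℚ)
      = 2 * ((2 * n).choose (n - 1) : ℚ) := by
  rw [aux_partial n n le_rfl]
  simp only [Nat.sub_self, Nat.mul_zero, Nat.choose_zero_right, Nat.cast_zero, Nat.cast_one]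
  have hsymm : (2 * n).choose (n - 1) = (2 * n).choose (n + 1) := by
    have : n - 1 = 2 * n - (n + 1) := by omega
    rw [this, Nat.choose_symm (by omega)]
  have hc : ((2 * n).choose (n + 1) : ℚ) * (n + 1) = ((2 * n).choose n : ℚ) * n := by
    have := Nat.choose_succ_right_eq (2 * n) n
    have h2 : 2 * n - n = n := by omega
    rw [h2] at this
    exact_mod_cast this
  have hk := cb_key n
  have hn1 : ((n : ℚ) + 1) ≠ 0 := by positivity
  rw [hsymm]
  have : ((2 * n).choose (n + 1) : ℚ) = ((2 * n).choose n : ℚ) * n / (n + 1) := by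
    rw [eq_div_iff hn1]; linarith [hc]
  rw [this]
  have : ((2 * (n + 1)).choose (n + 1) : ℚ)
      = 2 * (2 * n + 1) * ((2 * n).choose n : ℚ) / (n + 1) := by
    rw [eq_div_iff hn1]; linarith [hk]
  rw [this]
  field_simp
  ring
end

section
/- Fix a natural number n ≥ 1 and let f(X) = (∑_{i=1}^{n} (1/i) · C(2(i−1), i−1) · X^i)^2, a polynomial with rational coefficients. Then the coefficient of X^{n+1} in the derivative f'(X) equals 2·a_n − 2·C(2n, n), where a_n = ∑_{i=1}^{n} (1/i) · C(2(i−1), i−1) · C(2(n+1−i), n+1−i). -/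
open Finset Polynomial

private lemma key_sum (n : ℕ) :
    (∑ i ∈ Finset.Icc 2 n,
        (1 / (i : ℚ) * ((2 * (i - 1)).choose (i - 1) : ℚ)) *
          (1 / ((n + 2 - i : ℕ) : ℚ) *
            ((2 * (n + 2 - i - 1)).choose (n + 2 - i - 1) : ℚ))) * ((n : ℚ) + 2)
    = 2 * ∑ i ∈ Finset.Icc 2 n,
        (1 / (i : ℚ) * ((2 * (i - 1)).choose (i - 1) : ℚ)) *
          ((2 * (n + 1 - i)).choose (n + 1 - i) : ℚ) := by
  rw [Finset.sum_mul]
  have step : ∀ i ∈ Finset.Icc 2 n,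
      (1 / (i : ℚ) * ((2 * (i - 1)).choose (i - 1) : ℚ)) *
          (1 / ((n + 2 - i : ℕ) : ℚ) *
            ((2 * (n + 2 - i - 1)).choose (n + 2 - i - 1) : ℚ)) * ((n : ℚ) + 2)
      = (1 / (i : ℚ) * ((2 * (i - 1)).choose (i - 1) : ℚ)) *
            ((2 * (n + 1 - i)).choose (n + 1 - i) : ℚ)
        + ((2 * (i - 1)).choose (i - 1) : ℚ) *
            (1 / ((n + 2 - i : ℕ) : ℚ) * ((2 * (n + 1 - i)).choose (n + 1 - i) : ℚ)) := by
    intro i hi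
    simp only [Finset.mem_Icc] at hi
    have h1 : n + 2 - i - 1 = n + 1 - i := by omega
    rw [h1]
    have hx : (i : ℚ) ≠ 0 := Nat.cast_ne_zero.mpr (by omega)
    have hy : ((n + 2 - i : ℕ) : ℚ) ≠ 0 := Nat.cast_ne_zero.mpr (by omega)
    have hxy : (i : ℚ) + ((n + 2 - i : ℕ) : ℚ) = (n : ℚ) + 2 := by
      rw [Nat.cast_sub (by omega : i ≤ n + 2)]
      push_cast
      ring
    rw [← hxy]
    field_simp
    ring
  rw [Finset.sum_congr rfl step, Finset.sum_add_distrib]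
  have hrefl : ∑ i ∈ Finset.Icc 2 n,
      ((2 * (i - 1)).choose (i - 1) : ℚ) *
        (1 / ((n + 2 - i : ℕ) : ℚ) * ((2 * (n + 1 - i)).choose (n + 1 - i) : ℚ))
      = ∑ i ∈ Finset.Icc 2 n,
        (1 / (i : ℚ) * ((2 * (i - 1)).choose (i - 1) : ℚ)) *
          ((2 * (n + 1 - i)).choose (n + 1 - i) : ℚ) := by
    refine Finset.sum_nbij' (fun i => n + 2 - i) (fun j => n + 2 - j) ?_ ?_ ?_ ?_ ?_
    · intro a ha
      simp only [Finset.mem_Icc] at *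
      omega
    · intro a ha
      simp only [Finset.mem_Icc] at *
      omega
    · intro a ha
      simp only [Finset.mem_Icc] at ha
      omega
    · intro a ha
      simp only [Finset.mem_Icc] at ha
      omega
    · intro a ha
      simp only [Finset.mem_Icc] at ha
      have e1 : n + 2 - a - 1 = n + 1 - a := by omega
      have e2 : n + 1 - (n + 2 - a) = a - 1 := by omega
      rw [e1, e2]
      ring
  rw [hrefl]
  ring

theorem coeff_derivative_f_n_add_one (n : ℕ) (hn : 1 ≤ n) :
    (Polynomial.derivative
        ((∑ i ∈ Finset.Icc 1 n,
          Polynomial.C ((1 / (i : ℚ)) * ((2 * (i - 1)).choose (i - 1) : ℚ)) *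
            (Polynomial.X : ℚ[X]) ^ i) ^ 2)).coeff (n + 1)
      = 2 * (∑ i ∈ Finset.Icc 1 n,
            (1 / (i : ℚ)) * ((2 * (i - 1)).choose (i - 1) : ℚ) *
              ((2 * (n + 1 - i)).choose (n + 1 - i) : ℚ))
        - 2 * ((2 * n).choose n : ℚ) := by
  set c : ℕ → ℚ := fun i => (1 / (i : ℚ)) * ((2 * (i - 1)).choose (i - 1) : ℚ) with hc
  set g : ℚ[X] := ∑ i ∈ Finset.Icc 1 n, Polynomial.C (c i) * (Polynomial.X : ℚ[X]) ^ i with hgdef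
  have hg : ∀ m : ℕ, g.coeff m = if m ∈ Finset.Icc 1 n then c m else 0 := by
    intro m
    rw [hgdef, Polynomial.finset_sum_coeff]
    simp only [Polynomial.coeff_C_mul, Polynomial.coeff_X_pow, mul_ite, mul_one, mul_zero]
    rw [Finset.sum_ite_eq]
  have hcoeff : (g ^ 2).coeff (n + 1 + 1)
      = ∑ i ∈ Finset.Icc 2 n, c i * c (n + 2 - i) := by
    rw [sq, Polynomial.coeff_mul, Finset.Nat.sum_antidiagonal_eq_sum_range_succ_mk]
    have hsub : Finset.Icc 2 n ⊆ Finset.range (n + 1 + 1).succ := by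
      intro x hx
      simp only [Finset.mem_Icc] at hx
      simp only [Finset.mem_range]
      omega
    rw [← Finset.sum_subset hsub]
    · refine Finset.sum_congr rfl fun i hi => ?_
      simp only [Finset.mem_Icc] at hi
      dsimp only
      have e : n + 1 + 1 - i = n + 2 - i := by omega
      rw [hg, hg, e, if_pos (by simp only [Finset.mem_Icc]; omega),
        if_pos (by simp only [Finset.mem_Icc]; omega)]
    · intro x hx hnx
      simp only [Finset.mem_range, Finset.mem_Icc, not_and, not_le] at hx hnx
      dsimp only
      rw [hg, hg]
      simp only [Finset.mem_Icc]
      split_ifs with h1 h2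
      · exfalso; omega
      · exact mul_zero _
      · exact zero_mul _
      · exact zero_mul _
  rw [Polynomial.coeff_derivative, hcoeff]
  have hsplit : (∑ i ∈ Finset.Icc 1 n, c i * ((2 * (n + 1 - i)).choose (n + 1 - i) : ℚ))
      = ((2 * n).choose n : ℚ)
        + ∑ i ∈ Finset.Icc 2 n, c i * ((2 * (n + 1 - i)).choose (n + 1 - i) : ℚ) := by
    rw [Finset.Icc_eq_cons_Ioc hn, Finset.sum_cons, ← Finset.Icc_add_one_left_eq_Ioc]
    norm_num [hc]
  simp only [hc] at hsplit ⊢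
  rw [hsplit]
  have key := key_sum n
  push_cast at key ⊢
  linear_combination key
end

section
/- For every natural number n ≥ 2, the identity 2·((1/(n+1))·C(2n, n) − (1/n)·C(2(n−1), n−1)) + ∑_{i=1}^{n−1} ((3(n−i)−1)/(2i(n−i+1))) · C(2(i−1), i−1) · C(2(n−i), n−i) = (3/2) · ∑_{i=1}^{n−1} (1/i) · C(2(i−1), i−1) · C(2(n−i), n−i) holds in the rational numbers. -/
open Finset

theorem count_T1_simplification (n : ℕ) (hn : 2 ≤ n) :
    2 * ((1 / ((n : ℚ) + 1)) * ((2 * n).choose n : ℚ)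
          - (1 / (n : ℚ)) * ((2 * (n - 1)).choose (n - 1) : ℚ))
      + ∑ i ∈ Finset.Icc 1 (n - 1),
          ((3 * ((n : ℚ) - (i : ℚ)) - 1) / (2 * (i : ℚ) * ((n : ℚ) - (i : ℚ) + 1))) *
            ((2 * (i - 1)).choose (i - 1) : ℚ) * ((2 * (n - i)).choose (n - i) : ℚ)
      = (3 / 2) * ∑ i ∈ Finset.Icc 1 (n - 1),
          (1 / (i : ℚ)) * ((2 * (i - 1)).choose (i - 1) : ℚ) *
            ((2 * (n - i)).choose (n - i) : ℚ) := by
  have hchoose : ∀ k : ℕ, ((2 * k).choose k : ℚ) = ((k : ℚ) + 1) * catalan k := by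
    intro k
    have h := succ_mul_catalan_eq_centralBinom k
    have h2 : k.centralBinom = (2 * k).choose k := rfl
    rw [h2] at h
    exact_mod_cast h.symm
  -- per-term identity
  have hterm : ∀ i ∈ Icc 1 (n - 1),
      3 / 2 * ((1 / (i : ℚ)) * ((2 * (i - 1)).choose (i - 1) : ℚ) *
          ((2 * (n - i)).choose (n - i) : ℚ))
        - ((3 * ((n : ℚ) - (i : ℚ)) - 1) / (2 * (i : ℚ) * ((n : ℚ) - (i : ℚ) + 1))) *
            ((2 * (i - 1)).choose (i - 1) : ℚ) * ((2 * (n - i)).choose (n - i) : ℚ)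
      = 2 * ((catalan (i - 1) : ℚ) * (catalan (n - i) : ℚ)) := by
    intro i hi
    simp only [mem_Icc] at hi
    obtain ⟨h1, h2⟩ := hi
    have hin : i ≤ n := by omega
    have hcast : (n : ℚ) - (i : ℚ) = ((n - i : ℕ) : ℚ) := by
      rw [Nat.cast_sub hin]
    have hi' : ((i - 1 : ℕ) : ℚ) + 1 = (i : ℚ) := by
      have : ((i - 1 : ℕ) : ℚ) = (i : ℚ) - 1 := by
        rw [Nat.cast_sub h1]; simp
      rw [this]; ring
    have ha : ((2 * (i - 1)).choose (i - 1) : ℚ) = (i : ℚ) * catalan (i - 1) := by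
      rw [hchoose, hi']
    have hb : ((2 * (n - i)).choose (n - i) : ℚ)
        = (((n - i : ℕ) : ℚ) + 1) * catalan (n - i) := hchoose _
    have hx : (i : ℚ) ≠ 0 := by
      have : (0 : ℚ) < i := by exact_mod_cast h1
      linarith
    have hy : ((n - i : ℕ) : ℚ) + 1 ≠ 0 := by positivity
    rw [ha, hb, hcast]
    generalize (catalan (i - 1) : ℚ) = c
    generalize (catalan (n - i) : ℚ) = d
    generalize ((n - i : ℕ) : ℚ) = y at hy ⊢
    generalize (i : ℚ) = x at hx ⊢
    field_simp
    ring
  -- sum of catalan products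
  have hsumnat : (∑ i ∈ Icc 1 (n - 1), catalan (i - 1) * catalan (n - i)) + catalan (n - 1)
      = catalan n := by
    obtain ⟨m, rfl⟩ : ∃ m, n = m + 1 := ⟨n - 1, by omega⟩
    simp only [Nat.add_sub_cancel]
    rw [show Icc 1 m = Ico 1 (m + 1) from (Finset.Ico_add_one_right_eq_Icc 1 m).symm,
      Finset.sum_Ico_eq_sum_range, catalan_succ,
      ← Finset.sum_range fun i => catalan i * catalan (m - i), Finset.sum_range_succ]
    simp only [Nat.add_sub_cancel, Nat.sub_self, catalan_zero, mul_one]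
    congr 1
    apply Finset.sum_congr rfl
    intro j hj
    simp only [mem_range] at hj
    congr 2 <;> omega
  have hsum : ∑ i ∈ Icc 1 (n - 1), (catalan (i - 1) : ℚ) * (catalan (n - i) : ℚ)
      = (catalan n : ℚ) - (catalan (n - 1) : ℚ) := by
    have h := congrArg (fun x : ℕ => (x : ℚ)) hsumnat
    push_cast at h
    linarith
  have hdiff : 3 / 2 * (∑ i ∈ Icc 1 (n - 1),
          (1 / (i : ℚ)) * ((2 * (i - 1)).choose (i - 1) : ℚ) *
            ((2 * (n - i)).choose (n - i) : ℚ))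
      - (∑ i ∈ Icc 1 (n - 1),
          ((3 * ((n : ℚ) - (i : ℚ)) - 1) / (2 * (i : ℚ) * ((n : ℚ) - (i : ℚ) + 1))) *
            ((2 * (i - 1)).choose (i - 1) : ℚ) * ((2 * (n - i)).choose (n - i) : ℚ))
      = 2 * ((catalan n : ℚ) - (catalan (n - 1) : ℚ)) := by
    rw [Finset.mul_sum, ← Finset.sum_sub_distrib, Finset.sum_congr rfl hterm,
      ← Finset.mul_sum, hsum]
  have hA : 2 * ((1 / ((n : ℚ) + 1)) * ((2 * n).choose n : ℚ)
          - (1 / (n : ℚ)) * ((2 * (n - 1)).choose (n - 1) : ℚ))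
      = 2 * ((catalan n : ℚ) - (catalan (n - 1) : ℚ)) := by
    have hn' : ((n - 1 : ℕ) : ℚ) + 1 = (n : ℚ) := by
      have : ((n - 1 : ℕ) : ℚ) = (n : ℚ) - 1 := by
        rw [Nat.cast_sub (by omega)]; simp
      rw [this]; ring
    rw [hchoose, hchoose, hn']
    have h1 : ((n : ℚ) + 1) ≠ 0 := by positivity
    have h2 : (n : ℚ) ≠ 0 := by
      have : (0 : ℚ) < n := by exact_mod_cast (by omega : 0 < n)
      linarith
    field_simp
  linarith [hdiff, hA]
end
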